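/- Let r ≥ 2 and let k, ℓ be chosen independently and uniformly at random from {0, 1, …, r−1}. Then the probability that gcd(k, ℓ) = 1 is greater than 1/2, i.e., the number of pairs (k, ℓ) ∈ {0,…,r−1}² with gcd(k, ℓ) = 1 exceeds r²/2. -/

import Mathlib

open Finset

namespace Stmt15

def C (m : ℕ) : ℕ := ((Finset.range m ×ˢ Finset.range m).filter
      (fun p => Nat.gcd p.1 p.2 = 1)).card

def Dc (n g : ℕ) : ℕ := ((Finset.range n ×ˢ Finset.range n).filter
      (fun p => Nat.gcd p.1 p.2 = g)).card

lemma gcd_mem (n : ℕ) : ∀ p ∈ (Finset.range n ×ˢ Finset.range n),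
    Nat.gcd p.1 p.2 ∈ Finset.range n := by
  rintro ⟨k, l⟩ hp
  simp only [mem_product, mem_range] at hp ⊢
  rcases Nat.eq_zero_or_pos k with hk | hk
  · simpa [hk] using hp.2
  · exact lt_of_le_of_lt (Nat.gcd_le_left _ hk) hp.1

lemma sum_Dc (n : ℕ) : ∑ g ∈ Finset.range n, Dc n g = n ^ 2 := by
  unfold Dc
  rw [← Finset.card_eq_sum_card_fiberwise (gcd_mem n)]
  simp [sq]

lemma sum_Dc_dvd (n t : ℕ) (hn : 1 ≤ n) (ht : 1 ≤ t) :
    ∑ g ∈ (Finset.range n).filter (fun g => t ∣ g), Dc n g = ((n-1)/t + 1) ^ 2 := by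
  have key : ∀ p ∈ (Finset.range n ×ˢ Finset.range n).filter
      (fun p => t ∣ Nat.gcd p.1 p.2), Nat.gcd p.1 p.2 ∈ (Finset.range n).filter (fun g => t ∣ g) := by
    rintro ⟨k, l⟩ hp
    simp only [mem_filter] at hp ⊢
    exact ⟨gcd_mem n _ hp.1, hp.2⟩
  have h1 := Finset.card_eq_sum_card_fiberwise key
  have h2 : ∀ g ∈ (Finset.range n).filter (fun g => t ∣ g),
      (((Finset.range n ×ˢ Finset.range n).filter (fun p => t ∣ Nat.gcd p.1 p.2)).filter
        (fun p => Nat.gcd p.1 p.2 = g)).card = Dc n g := by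
    intro g hg
    simp only [mem_filter] at hg
    unfold Dc
    congr 1
    rw [Finset.filter_filter]
    apply Finset.filter_congr
    intro p _
    constructor
    · rintro ⟨_, h⟩; exact h
    · rintro h; exact ⟨h ▸ hg.2, h⟩
  rw [Finset.sum_congr rfl h2] at h1
  rw [← h1]
  have h3 : (Finset.range n ×ˢ Finset.range n).filter (fun p => t ∣ Nat.gcd p.1 p.2)
      = (Finset.range n ×ˢ Finset.range n).filter (fun p => t ∣ p.1 ∧ t ∣ p.2) := by
    apply Finset.filter_congr
    intro p _
    constructor
    · intro h; exact ⟨h.trans (Nat.gcd_dvd_left _ _), h.trans (Nat.gcd_dvd_right _ _)⟩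
    · rintro ⟨h1, h2⟩; exact Nat.dvd_gcd h1 h2
  have h4 : ((Finset.range n).filter (fun g => t ∣ g)).card = (n-1)/t + 1 := by
    have : Finset.range n = insert 0 (Finset.Ioc 0 (n-1)) := by
      ext g
      simp only [mem_range, mem_insert, mem_Ioc]
      omega
    rw [this, Finset.filter_insert]
    simp only [Nat.dvd_zero, if_true]
    rw [Finset.card_insert_of_notMem (by simp), Nat.Ioc_filter_dvd_card_eq_div]
  rw [h3, Finset.filter_product (fun a => t ∣ a) (fun a => t ∣ a), Finset.card_product, h4, sq]

end Stmt15

namespace Stmt15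
open Finset

lemma Dc_zero (n : ℕ) (hn : 1 ≤ n) : Dc n 0 = 1 := by
  unfold Dc
  have : (Finset.range n ×ˢ Finset.range n).filter (fun p => Nat.gcd p.1 p.2 = 0)
      = {(0, 0)} := by
    ext ⟨k, l⟩
    simp only [mem_filter, mem_product, mem_range, mem_singleton, Nat.gcd_eq_zero_iff,
      Prod.mk.injEq]
    omega
  rw [this, Finset.card_singleton]

lemma Dc_eq_C (n g : ℕ) (hn : 1 ≤ n) (hg : 1 ≤ g) : Dc n g = C ((n-1)/g + 1) := by
  unfold Dc C
  apply Finset.card_bij' (fun p _ => (p.1 / g, p.2 / g)) (fun q _ => (g * q.1, g * q.2))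
  · rintro ⟨k, l⟩ hp
    simp only [mem_filter, mem_product, mem_range] at hp ⊢
    obtain ⟨⟨hk, hl⟩, hgcd⟩ := hp
    have hdk : g ∣ k := hgcd ▸ Nat.gcd_dvd_left k l
    have hdl : g ∣ l := hgcd ▸ Nat.gcd_dvd_right k l
    refine ⟨⟨?_, ?_⟩, ?_⟩
    · have : k / g ≤ (n-1)/g := Nat.div_le_div_right (by omega)
      omega
    · have : l / g ≤ (n-1)/g := Nat.div_le_div_right (by omega)
      omega
    · have := Nat.coprime_div_gcd_div_gcd (m := k) (n := l) (by omega)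
      rwa [hgcd] at this
  · rintro ⟨a, b⟩ hq
    simp only [mem_filter, mem_product, mem_range] at hq ⊢
    obtain ⟨⟨ha, hb⟩, hab⟩ := hq
    have ha' : a ≤ (n-1)/g := by omega
    have hb' : b ≤ (n-1)/g := by omega
    have hga : g * a ≤ n - 1 := by
      calc g * a ≤ g * ((n-1)/g) := by exact Nat.mul_le_mul_left g ha'
      _ ≤ n - 1 := Nat.mul_div_le _ _
    have hgb : g * b ≤ n - 1 := by
      calc g * b ≤ g * ((n-1)/g) := by exact Nat.mul_le_mul_left g hb'
      _ ≤ n - 1 := Nat.mul_div_le _ _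
    refine ⟨⟨by omega, by omega⟩, ?_⟩
    rw [Nat.gcd_mul_left, hab, Nat.mul_one]
  · rintro ⟨k, l⟩ hp
    simp only [mem_filter, mem_product, mem_range] at hp
    obtain ⟨⟨hk, hl⟩, hgcd⟩ := hp
    have hdk : g ∣ k := hgcd ▸ Nat.gcd_dvd_left k l
    have hdl : g ∣ l := hgcd ▸ Nat.gcd_dvd_right k l
    simp [Nat.mul_div_cancel' hdk, Nat.mul_div_cancel' hdl]
  · rintro ⟨a, b⟩ hq
    simp [Nat.mul_div_cancel_left _ (by omega : 0 < g)]

lemma C_le (m : ℕ) : 4 * C m ≤ 3 * m ^ 2 := by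
  have hdisj : Disjoint ((Finset.range m ×ˢ Finset.range m).filter
        (fun p => Nat.gcd p.1 p.2 = 1))
      ((Finset.range m ×ˢ Finset.range m).filter (fun p => 2 ∣ p.1 ∧ 2 ∣ p.2)) := by
    rw [Finset.disjoint_filter]
    rintro ⟨k, l⟩ _ h1 ⟨h2, h3⟩
    have : (2 : ℕ) ∣ Nat.gcd k l := Nat.dvd_gcd h2 h3
    rw [h1] at this
    omega
  have hcard := Finset.card_union_of_disjoint hdisj
  have hle : (((Finset.range m ×ˢ Finset.range m).filter (fun p => Nat.gcd p.1 p.2 = 1)) ∪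
      ((Finset.range m ×ˢ Finset.range m).filter (fun p => 2 ∣ p.1 ∧ 2 ∣ p.2))).card
      ≤ m ^ 2 := by
    calc _ ≤ (Finset.range m ×ˢ Finset.range m).card :=
        Finset.card_le_card (Finset.union_subset (Finset.filter_subset _ _)
          (Finset.filter_subset _ _))
    _ = m ^ 2 := by simp [sq]
  rcases Nat.eq_zero_or_pos m with hm | hm
  · subst hm; simp [C]
  have he : ((Finset.range m ×ˢ Finset.range m).filter (fun p => 2 ∣ p.1 ∧ 2 ∣ p.2)).card
      = ((m-1)/2 + 1) ^ 2 := by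
    rw [Finset.filter_product (fun a => 2 ∣ a) (fun a => 2 ∣ a), Finset.card_product]
    have h4 : ((Finset.range m).filter (fun g => 2 ∣ g)).card = (m-1)/2 + 1 := by
      have : Finset.range m = insert 0 (Finset.Ioc 0 (m-1)) := by
        ext g
        simp only [mem_range, mem_insert, mem_Ioc]
        omega
      rw [this, Finset.filter_insert]
      simp only [Nat.dvd_zero, if_true]
      rw [Finset.card_insert_of_notMem (by simp), Nat.Ioc_filter_dvd_card_eq_div]
    rw [h4, sq]
  have key : C m + ((m-1)/2 + 1) ^ 2 ≤ m ^ 2 := by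
    rw [← he]
    unfold C
    omega
  have : m ^ 2 ≤ 4 * ((m-1)/2 + 1) ^ 2 := by
    have h5 : m ≤ 2 * ((m-1)/2 + 1) := by omega
    calc m ^ 2 ≤ (2 * ((m-1)/2 + 1)) ^ 2 := Nat.pow_le_pow_left h5 2
    _ = 4 * ((m-1)/2 + 1) ^ 2 := by ring
  omega

end Stmt15

namespace Stmt15
open Finset

lemma copr30 (g : ℕ) : Nat.Coprime g 30 ↔ (¬ 2 ∣ g ∧ ¬ 3 ∣ g ∧ ¬ 5 ∣ g) := by
  have h2 : Nat.Coprime g 2 ↔ ¬ 2 ∣ g := by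
    rw [Nat.coprime_comm]; exact (Nat.prime_two).coprime_iff_not_dvd
  have h3 : Nat.Coprime g 3 ↔ ¬ 3 ∣ g := by
    rw [Nat.coprime_comm]; exact (Nat.prime_three).coprime_iff_not_dvd
  have h5 : Nat.Coprime g 5 ↔ ¬ 5 ∣ g := by
    rw [Nat.coprime_comm]
    exact (by norm_num : Nat.Prime 5).coprime_iff_not_dvd
  rw [show (30:ℕ) = 2*(3*5) by norm_num, Nat.coprime_mul_iff_right,
    Nat.coprime_mul_iff_right, h2, h3, h5]

lemma point (D : ℕ → ℕ) (g : ℕ) :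
    (if ¬ Nat.Coprime g 30 then D g else 0) + ((if 6 ∣ g then D g else 0)
      + (if 10 ∣ g then D g else 0) + (if 15 ∣ g then D g else 0))
    = (if 2 ∣ g then D g else 0) + ((if 3 ∣ g then D g else 0)
      + (if 5 ∣ g then D g else 0) + (if 30 ∣ g then D g else 0)) := by
  have hc : (¬ Nat.Coprime g 30) ↔ (2 ∣ g ∨ 3 ∣ g ∨ 5 ∣ g) := by
    rw [copr30]; tauto
  have h6 : 6 ∣ g ↔ (2 ∣ g ∧ 3 ∣ g) := by omega
  have h10 : 10 ∣ g ↔ (2 ∣ g ∧ 5 ∣ g) := by omega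
  have h15 : 15 ∣ g ↔ (3 ∣ g ∧ 5 ∣ g) := by omega
  have h30 : 30 ∣ g ↔ (2 ∣ g ∧ 3 ∣ g ∧ 5 ∣ g) := by omega
  by_cases p2 : 2 ∣ g <;> by_cases p3 : 3 ∣ g <;> by_cases p5 : 5 ∣ g <;>
    simp [hc, h6, h10, h15, h30, p2, p3, p5]

end Stmt15

namespace Stmt15
open Finset

lemma filter_not_copr (n : ℕ) (hn : 2 ≤ n) :
    (Finset.range n).filter (fun g => ¬ Nat.Coprime g 30)
    = insert 0 ((Finset.range n).filter (fun g => 2 ≤ g ∧ ¬ Nat.Coprime g 30)) := by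
  ext g
  simp only [mem_filter, mem_insert, mem_range]
  constructor
  · rintro ⟨hg, hc⟩
    rcases Nat.lt_or_ge g 2 with h | h
    · interval_cases g
      · left; rfl
      · exact absurd (Nat.coprime_one_left 30) hc
    · right; exact ⟨hg, h, hc⟩
  · rintro (rfl | ⟨hg, _, hc⟩)
    · refine ⟨by omega, ?_⟩
      simp [Nat.Coprime]
    · exact ⟨hg, hc⟩

lemma E2 (n : ℕ) (hn : 2 ≤ n) :
    1 + (∑ g ∈ (Finset.range n).filter (fun g => 2 ≤ g ∧ ¬ Nat.Coprime g 30), Dc n g)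
      + (((n-1)/6+1)^2 + ((n-1)/10+1)^2 + ((n-1)/15+1)^2)
    = ((n-1)/2+1)^2 + (((n-1)/3+1)^2 + ((n-1)/5+1)^2 + ((n-1)/30+1)^2) := by
  have hsum : ∑ g ∈ Finset.range n, ((if ¬ Nat.Coprime g 30 then Dc n g else 0)
        + ((if 6 ∣ g then Dc n g else 0) + (if 10 ∣ g then Dc n g else 0)
          + (if 15 ∣ g then Dc n g else 0)))
      = ∑ g ∈ Finset.range n, ((if 2 ∣ g then Dc n g else 0) + ((if 3 ∣ g then Dc n g else 0)
        + (if 5 ∣ g then Dc n g else 0) + (if 30 ∣ g then Dc n g else 0))) :=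
    Finset.sum_congr rfl (fun g _ => point (Dc n) g)
  have hn1 : 1 ≤ n := by omega
  simp only [Finset.sum_add_distrib] at hsum
  rw [← Finset.sum_filter, ← Finset.sum_filter, ← Finset.sum_filter, ← Finset.sum_filter,
    ← Finset.sum_filter, ← Finset.sum_filter, ← Finset.sum_filter, ← Finset.sum_filter] at hsum
  rw [sum_Dc_dvd n 6 hn1 (by norm_num), sum_Dc_dvd n 10 hn1 (by norm_num), sum_Dc_dvd n 15 hn1 (by norm_num), sum_Dc_dvd n 2 hn1 (by norm_num),
    sum_Dc_dvd n 3 hn1 (by norm_num), sum_Dc_dvd n 5 hn1 (by norm_num), sum_Dc_dvd n 30 hn1 (by norm_num)] at hsum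
  rw [filter_not_copr n hn, Finset.sum_insert (by simp), Dc_zero n hn1] at hsum
  omega

lemma partition (n : ℕ) (hn : 2 ≤ n) :
    n ^ 2 = 1 + C n
      + (∑ g ∈ (Finset.range n).filter (fun g => 2 ≤ g ∧ ¬ Nat.Coprime g 30), Dc n g)
      + (∑ g ∈ (Finset.range n).filter (fun g => 2 ≤ g ∧ Nat.Coprime g 30), Dc n g) := by
  have h := sum_Dc n
  rw [← Finset.sum_filter_add_sum_filter_not (Finset.range n) (fun g => 2 ≤ g)] at h
  have hsmall : (Finset.range n).filter (fun g => ¬ 2 ≤ g) = {0, 1} := by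
    ext g
    simp only [mem_filter, mem_range, mem_insert, mem_singleton]
    omega
  rw [hsmall] at h
  have h01 : ∑ g ∈ ({0, 1} : Finset ℕ), Dc n g = 1 + C n := by
    rw [Finset.sum_pair (by omega), Dc_zero n (by omega), Dc_eq_C n 1 (by omega) le_rfl]
    congr 1
    congr 1
    omega
  rw [← Finset.sum_filter_add_sum_filter_not ((Finset.range n).filter (fun g => 2 ≤ g))
    (fun g => Nat.Coprime g 30), Finset.filter_filter, Finset.filter_filter] at h
  rw [h01] at h
  omega

end Stmt15

namespace Stmt15
open Finset

lemma tail_bound (s : ℕ) (hs : 52 ≤ s) :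
    (∑ g ∈ Finset.Icc 53 s, (if g % 2 = 1 then (1 : ℚ) / (g:ℚ)^2 else 0))
    ≤ 1/104 - 1/(2*((s : ℚ) + ((s % 2 : ℕ) : ℚ))) := by
  induction s, hs using Nat.le_induction with
  | base =>
    rw [show Finset.Icc 53 52 = ∅ from Finset.Icc_eq_empty (by omega)]
    norm_num
  | succ s hs ih =>
    rw [Finset.sum_Icc_succ_top (by omega)]
    have hsq : (52:ℚ) ≤ (s:ℚ) := by exact_mod_cast hs
    rcases Nat.even_or_odd s with he | ho
    · -- s even, s+1 odd
      have e0 : s % 2 = 0 := Nat.even_iff.mp he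
      have e1 : (s+1) % 2 = 1 := by omega
      rw [if_pos e1]
      rw [e0] at ih
      rw [e1]
      push_cast
      have key : (1:ℚ) / ((s:ℚ)+1)^2 ≤ 1/(2*(s:ℚ)) - 1/(2*((s:ℚ)+1+1)) := by
        have h1 : 1/(2*(s:ℚ)) - 1/(2*((s:ℚ)+1+1)) = 1/((s:ℚ)*((s:ℚ)+2)) := by
          field_simp
          ring
        rw [h1]
        apply one_div_le_one_div_of_le
        · nlinarith
        · nlinarith
      push_cast at ih
      simp only [add_zero] at ih
      linarith
    · -- s odd, s+1 even
      have e0 : s % 2 = 1 := Nat.odd_iff.mp ho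
      have e1 : (s+1) % 2 = 0 := by omega
      rw [if_neg (by omega)]
      rw [e0] at ih
      rw [e1]
      push_cast
      push_cast at ih
      simp only [add_zero]
      linarith

def E : Finset ℕ := {7, 11, 13, 17, 19, 23, 29, 31, 37, 41, 43, 47, 49}

lemma qE_bound : ∑ g ∈ E, (1:ℚ)/(g:ℚ)^2 ≤ 3/50 - 1/104 := by
  rw [E]
  repeat rw [Finset.sum_insert (by decide)]
  rw [Finset.sum_singleton]
  norm_num

lemma mem_E (g : ℕ) (hg : 2 ≤ g) (hc : Nat.Coprime g 30) (hle : g ≤ 52) : g ∈ E := by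
  interval_cases g <;> revert hc <;> decide

end Stmt15

namespace Stmt15
open Finset

lemma Qbound (n : ℕ) (hn : 2 ≤ n) :
    ∑ g ∈ (Finset.range n).filter (fun g => 2 ≤ g ∧ Nat.Coprime g 30), (1:ℚ)/(g:ℚ)^2
      ≤ 3/50 := by
  set F := (Finset.range n).filter (fun g => 2 ≤ g ∧ Nat.Coprime g 30) with hF
  rw [← Finset.sum_filter_add_sum_filter_not F (fun g => g ≤ 52)]
  have h1 : ∑ g ∈ F.filter (fun g => g ≤ 52), (1:ℚ)/(g:ℚ)^2 ≤ 3/50 - 1/104 := by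
    refine (Finset.sum_le_sum_of_subset_of_nonneg ?_ ?_).trans qE_bound
    · intro g hg
      simp only [hF, Finset.mem_filter] at hg
      exact mem_E g hg.1.2.1 hg.1.2.2 hg.2
    · intro g _ _
      positivity
  have h2 : ∑ g ∈ F.filter (fun g => ¬ g ≤ 52), (1:ℚ)/(g:ℚ)^2 ≤ 1/104 := by
    have hsub : F.filter (fun g => ¬ g ≤ 52) ⊆
        (Finset.Icc 53 (n-1)).filter (fun g => g % 2 = 1) := by
      intro g hg
      simp only [hF, Finset.mem_filter, Finset.mem_range, Finset.mem_Icc] at hg ⊢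
      obtain ⟨⟨hgn, _, hc⟩, h52⟩ := hg
      have := (copr30 g).mp hc
      exact ⟨⟨by omega, by omega⟩, by omega⟩
    calc ∑ g ∈ F.filter (fun g => ¬ g ≤ 52), (1:ℚ)/(g:ℚ)^2
        ≤ ∑ g ∈ (Finset.Icc 53 (n-1)).filter (fun g => g % 2 = 1), (1:ℚ)/(g:ℚ)^2 :=
          Finset.sum_le_sum_of_subset_of_nonneg hsub (fun g _ _ => by positivity)
      _ = ∑ g ∈ Finset.Icc 53 (n-1), (if g % 2 = 1 then (1:ℚ)/(g:ℚ)^2 else 0) :=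
          Finset.sum_filter _ _
      _ ≤ 1/104 := by
          by_cases h52 : 52 ≤ n - 1
          · refine (tail_bound (n-1) h52).trans ?_
            have : (0:ℚ) < 2*(((n-1:ℕ)) : ℚ) + (((n-1) % 2 : ℕ) : ℚ) * 2 := by
              have : (52:ℚ) ≤ ((n-1:ℕ):ℚ) := by exact_mod_cast h52
              positivity
            have hpos : (0:ℚ) ≤ 1/(2*(((n-1:ℕ)):ℚ) + ((((n-1) % 2 : ℕ)):ℚ)*2) := by positivity
            have heq : 2*((((n-1:ℕ)):ℚ) + (((n-1) % 2 : ℕ):ℚ)) =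
                2*(((n-1:ℕ)):ℚ) + ((((n-1) % 2 : ℕ)):ℚ)*2 := by ring
            rw [heq]
            linarith
          · rw [show Finset.Icc 53 (n-1) = ∅ from Finset.Icc_eq_empty (by omega)]
            norm_num
  linarith

lemma cardF2 (n : ℕ) (hn : 8 ≤ n) :
    2 * ((Finset.range n).filter (fun g => 2 ≤ g ∧ Nat.Coprime g 30)).card + 6 ≤ n := by
  have hcard : ((Finset.range n).filter (fun g => 2 ≤ g ∧ Nat.Coprime g 30)).card
      ≤ (Finset.Icc 3 ((n-2)/2)).card := by
    apply Finset.card_le_card_of_injOn (fun g => (g-1)/2)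
    · intro g hg
      simp only [Finset.mem_coe, Finset.mem_filter, Finset.mem_range] at hg
      obtain ⟨hgn, hg2, hc⟩ := hg
      obtain ⟨d2, d3, d5⟩ := (copr30 g).mp hc
      have e2 : g % 2 ≠ 0 := fun h => d2 (Nat.dvd_of_mod_eq_zero h)
      have e3 : g % 3 ≠ 0 := fun h => d3 (Nat.dvd_of_mod_eq_zero h)
      have e5 : g % 5 ≠ 0 := fun h => d5 (Nat.dvd_of_mod_eq_zero h)
      have h7 : 7 ≤ g := by
        by_contra hcon
        push_neg at hcon
        interval_cases g <;> omega
      simp only [Finset.mem_coe, Finset.mem_Icc]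
      omega
    · intro g hg h hh heq
      simp only [Finset.mem_coe, Finset.mem_filter] at hg hh
      have e2 : g % 2 ≠ 0 := fun hx => ((copr30 g).mp hg.2.2).1 (Nat.dvd_of_mod_eq_zero hx)
      have f2 : h % 2 ≠ 0 := fun hx => ((copr30 h).mp hh.2.2).1 (Nat.dvd_of_mod_eq_zero hx)
      simp only at heq
      omega
  rw [Nat.card_Icc] at hcard
  omega

lemma nat_div_le_q (s t : ℕ) : ((s/t : ℕ) : ℚ) ≤ (s:ℚ)/(t:ℚ) := Nat.cast_div_le

lemma q_le_nat_div (s t : ℕ) (ht : 0 < t) : (s:ℚ)/(t:ℚ) ≤ ((s/t : ℕ) : ℚ) + 1 := by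
  have h := Nat.div_add_mod s t
  have hm : s % t < t := Nat.mod_lt _ ht
  have htq : (0:ℚ) < (t:ℚ) := by exact_mod_cast ht
  rw [div_le_iff₀ htq]
  have hc : (s:ℚ) = (t:ℚ) * ((s/t : ℕ) : ℚ) + ((s % t : ℕ) : ℚ) := by exact_mod_cast h.symm
  have hmq : ((s % t : ℕ) : ℚ) < (t:ℚ) := by exact_mod_cast hm
  nlinarith [hc]

end Stmt15

namespace Stmt15
open Finset

set_option maxHeartbeats 1000000 in
lemma main_big (n : ℕ) (hn : 32 ≤ n) : n ^ 2 < 2 * C n := by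
  have hn2 : 2 ≤ n := by omega
  have hn1 : 1 ≤ n := by omega
  have hpart := partition n hn2
  have hE2 := E2 n hn2
  set F2 := (Finset.range n).filter (fun g => 2 ≤ g ∧ Nat.Coprime g 30) with hF2
  set F1 := (Finset.range n).filter (fun g => 2 ≤ g ∧ ¬ Nat.Coprime g 30) with hF1
  set R1 := ∑ g ∈ F1, Dc n g with hR1
  set R2 := ∑ g ∈ F2, Dc n g with hR2
  set s := n - 1 with hs
  have hR2nat : 4 * R2 ≤ 3 * ∑ g ∈ F2, (s/g + 1)^2 := by
    rw [hR2, Finset.mul_sum, Finset.mul_sum]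
    apply Finset.sum_le_sum
    intro g hg
    rw [hF2, Finset.mem_filter] at hg
    rw [Dc_eq_C n g hn1 (by omega)]
    exact C_le _
  suffices h : 2 * (R1:ℚ) + 2 * (R2:ℚ) + 2 < (n:ℚ)^2 by
    have h2 : ((2*R1 + 2*R2 + 2 : ℕ):ℚ) < ((n^2 : ℕ):ℚ) := by push_cast; linarith
    have h3 : 2*R1 + 2*R2 + 2 < n^2 := by exact_mod_cast h2
    omega
  set q : ℚ := (s : ℚ) with hq
  have hq31 : (31:ℚ) ≤ q := by
    rw [hq]; exact_mod_cast (by omega : 31 ≤ s)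
  have hnq : (n:ℚ) = q + 1 := by
    rw [hq, hs]
    push_cast [Nat.cast_sub hn1]
    ring
  have hb : ∀ t : ℕ, 0 < t →
      ((s/t : ℕ):ℚ) + 1 ≤ q/(t:ℚ) + 1 ∧ q/(t:ℚ) ≤ ((s/t : ℕ):ℚ) + 1 := by
    intro t ht
    constructor
    · have := nat_div_le_q s t
      linarith
    · exact q_le_nat_div s t ht
  have sq_le : ∀ t : ℕ, 0 < t → (((s/t : ℕ):ℚ) + 1)^2 ≤ (q/(t:ℚ) + 1)^2 := by
    intro t ht
    exact pow_le_pow_left₀ (by positivity) (hb t ht).1 2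
  have sq_ge : ∀ t : ℕ, 0 < t → (q/(t:ℚ))^2 ≤ (((s/t : ℕ):ℚ) + 1)^2 := by
    intro t ht
    apply pow_le_pow_left₀ (by positivity) (hb t ht).2 2
  have hE2q : (1:ℚ) + R1 + ((((s/6:ℕ):ℚ)+1)^2 + (((s/10:ℕ):ℚ)+1)^2 + (((s/15:ℕ):ℚ)+1)^2)
      = (((s/2:ℕ):ℚ)+1)^2 + ((((s/3:ℕ):ℚ)+1)^2 + (((s/5:ℕ):ℚ)+1)^2 + (((s/30:ℕ):ℚ)+1)^2) := by
    have h0 : ((1 + R1 + ((s/6+1)^2 + (s/10+1)^2 + (s/15+1)^2) : ℕ) : ℚ)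
        = (((s/2+1)^2 + ((s/3+1)^2 + (s/5+1)^2 + (s/30+1)^2) : ℕ) : ℚ) := by
      exact_mod_cast congrArg (Nat.cast : ℕ → ℚ) hE2
    push_cast at h0
    linarith
  have hsumq : (∑ g ∈ F2, (((s/g : ℕ):ℚ) + 1)^2)
      ≤ (3/2)*q^2*(∑ g ∈ F2, 1/(g:ℚ)^2) + 3 * (F2.card : ℚ) := by
    calc (∑ g ∈ F2, (((s/g : ℕ):ℚ) + 1)^2)
        ≤ ∑ g ∈ F2, ((3/2)*q^2*(1/(g:ℚ)^2) + 3) := by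
          apply Finset.sum_le_sum
          intro g hg
          rw [hF2, Finset.mem_filter] at hg
          have hg0 : (0:ℚ) < (g:ℚ) := by exact_mod_cast (by omega : 0 < g)
          have h1 := sq_le g (by omega)
          have h2 : (q/(g:ℚ) + 1)^2 ≤ (3/2)*(q/(g:ℚ))^2 + 3 := by
            nlinarith [sq_nonneg (q/(g:ℚ) - 2)]
          have h3 : (3/2)*(q/(g:ℚ))^2 = (3/2)*q^2*(1/(g:ℚ)^2) := by
            field_simp
          linarith
      _ = (3/2)*q^2*(∑ g ∈ F2, 1/(g:ℚ)^2) + 3 * (F2.card : ℚ) := by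
          rw [Finset.sum_add_distrib, Finset.sum_const, ← Finset.mul_sum]
          push_cast
          ring
  have hQ : (∑ g ∈ F2, 1/(g:ℚ)^2) ≤ 3/50 := Qbound n hn2
  have hQ2 : (3/2)*q^2*(∑ g ∈ F2, 1/(g:ℚ)^2) ≤ (3/2)*q^2*(3/50) :=
    mul_le_mul_of_nonneg_left hQ (by positivity)
  have hcardq : (F2.card : ℚ) ≤ (q - 5)/2 := by
    have hc0 := cardF2 n (by omega)
    have h2 : ((2 * F2.card + 6 : ℕ) : ℚ) ≤ (n:ℚ) := by exact_mod_cast hc0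
    push_cast at h2
    rw [hnq] at h2
    linarith
  have hcast : 4*(R2:ℚ) ≤ 3 * (∑ g ∈ F2, (((s/g : ℕ):ℚ) + 1)^2) := by
    have h0 : ((4*R2 : ℕ):ℚ) ≤ ((3 * ∑ g ∈ F2, (s/g+1)^2 : ℕ):ℚ) := Nat.cast_le.mpr hR2nat
    push_cast at h0
    linarith
  have hR2q : (R2 : ℚ) ≤ (27/400)*q^2 + (9/8)*(q-5) := by
    linarith [hcast, hsumq, hQ2, hcardq]
  have b2 := sq_le 2 (by norm_num)
  have b3 := sq_le 3 (by norm_num)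
  have b5 := sq_le 5 (by norm_num)
  have b30 := sq_le 30 (by norm_num)
  have c6 := sq_ge 6 (by norm_num)
  have c10 := sq_ge 10 (by norm_num)
  have c15 := sq_ge 15 (by norm_num)
  have hR1q : (R1:ℚ) ≤ (q/2+1)^2 + (q/3+1)^2 + (q/5+1)^2 + (q/30+1)^2
      - (q/6)^2 - (q/10)^2 - (q/15)^2 - 1 := by
    linarith [hE2q, b2, b3, b5, b30, c6, c10, c15]
  rw [hnq]
  nlinarith [hR1q, hR2q, hq31, sq_nonneg (q - 31)]

end Stmt15

set_option maxRecDepth 100000 in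
theorem stmt_15 (r : ℕ) (hr : 2 ≤ r) :
    2 * ((Finset.range r ×ˢ Finset.range r).filter
      (fun p => Nat.gcd p.1 p.2 = 1)).card > r ^ 2 := by
  rcases Nat.lt_or_ge r 32 with h | h
  · interval_cases r <;> decide
  · have := Stmt15.main_big r h
    unfold Stmt15.C at this
    exact this
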